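/- Let θ>0, a>0 and 0<c<1. Let D have the generalized Dickman distribution GD(θ,a); let (E_k), k≥1, be i.i.d. exponential random variables with rate θ, independent of D, and set T_n = E_1 + ⋯ + E_n. Define the innovation ε = Σ_{n=1}^∞ a c e^{T_n} 1{T_n ≤ log(1/c)} (a finite sum almost surely). Then cD + ε has the generalized Dickman distribution GD(θ,a). (Hence the autoregressive process X_n = cX_{n−1} + ε_n with i.i.d. innovations distributed as ε and X_0 ∼ GD(θ,a) is strictly stationary with GD(θ,a) marginals.) -/

import Mathlib

open MeasureTheory ProbabilityTheory Real Set Filter Topology ENNReal NNReal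

set_option linter.unusedVariables false
set_option linter.unusedSectionVars false
set_option maxHeartbeats 1000000

noncomputable def dickGf (s z : ℝ) : ℝ := if z = 0 then s else (1 - Real.exp (-(s * z))) / z

lemma continuous_dickGf (s : ℝ) : Continuous (dickGf s) := by
  rw [continuous_iff_continuousAt]
  intro z
  rcases eq_or_ne z 0 with rfl | hz
  · have hd : HasDerivAt (fun z : ℝ => 1 - Real.exp (-(s * z))) s 0 := by
      have : HasDerivAt (fun z : ℝ => -(s * z)) (-s) 0 := by
        simpa using ((hasDerivAt_id (0:ℝ)).const_mul s).fun_neg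
      simpa using ((this.exp).const_sub 1)
    have hslope := hasDerivAt_iff_tendsto_slope.1 hd
    have h1 : Tendsto (dickGf s) (𝓝[≠] (0:ℝ)) (𝓝 s) := by
      refine hslope.congr' ?_
      filter_upwards [self_mem_nhdsWithin] with y hy
      simp only [Set.mem_compl_iff, Set.mem_singleton_iff] at hy
      simp [slope, dickGf, hy, div_eq_inv_mul]
    have h0 : dickGf s 0 = s := by simp [dickGf]
    rw [ContinuousAt, h0, ← nhdsNE_sup_pure (0:ℝ), tendsto_sup]
    refine ⟨h1, by simpa [h0] using tendsto_pure_nhds (dickGf s) 0⟩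
  · have hc : ContinuousAt (fun y => (1 - Real.exp (-(s * y))) / y) z :=
      ContinuousAt.div (by fun_prop) continuousAt_id hz
    refine hc.congr ?_
    filter_upwards [isOpen_compl_singleton.mem_nhds (by simpa using hz)] with y hy
    simp only [Set.mem_compl_iff, Set.mem_singleton_iff] at hy
    simp [dickGf, hy]

noncomputable def dickQ (s a c u : ℝ) : ℝ := 1 - Real.exp (-(s * (a * c * Real.exp u)))

noncomputable def dickG (s a c L t : ℝ) : ℝ :=
  if t ≤ L then Real.exp (-(s * (a * c * Real.exp t))) else 1

noncomputable def dickP (s a c x : ℝ) : ℝ := ∫ u in (0:ℝ)..x, dickQ s a c u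

noncomputable def dickPhi (θ s a c L t : ℝ) : ℝ :=
  Real.exp (-(θ * (dickP s a c L - dickP s a c (min t L))))

lemma continuous_dickQ (s a c : ℝ) : Continuous (dickQ s a c) := by
  unfold dickQ; fun_prop

lemma dickQ_nonneg {s a c : ℝ} (hs : 0 ≤ s) (ha : 0 ≤ a) (hc : 0 ≤ c) (u : ℝ) :
    0 ≤ dickQ s a c u := by
  have : Real.exp (-(s * (a * c * Real.exp u))) ≤ 1 := by
    rw [Real.exp_le_one_iff]
    have : 0 ≤ s * (a * c * Real.exp u) := by positivity
    linarith
  simpa [dickQ] using this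

lemma dickQ_le_one (s a c u : ℝ) : dickQ s a c u ≤ 1 := by
  have := Real.exp_pos (-(s * (a * c * Real.exp u)))
  simp only [dickQ]; linarith

lemma hasDerivAt_dickP (s a c x : ℝ) : HasDerivAt (dickP s a c) (dickQ s a c x) x := by
  exact intervalIntegral.integral_hasDerivAt_right
    ((continuous_dickQ s a c).intervalIntegrable _ _)
    ((continuous_dickQ s a c).stronglyMeasurable.stronglyMeasurableAtFilter)
    (continuous_dickQ s a c).continuousAt

lemma continuous_dickP (s a c : ℝ) : Continuous (dickP s a c) :=
  continuous_iff_continuousAt.2 fun x => (hasDerivAt_dickP s a c x).continuousAt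

lemma dickP_mono {s a c : ℝ} (hs : 0 ≤ s) (ha : 0 ≤ a) (hc : 0 ≤ c) {x y : ℝ} (hxy : x ≤ y) :
    dickP s a c x ≤ dickP s a c y := by
  have h1 : dickP s a c y - dickP s a c x = ∫ u in x..y, dickQ s a c u := by
    rw [dickP, dickP, ← intervalIntegral.integral_add_adjacent_intervals
      ((continuous_dickQ s a c).intervalIntegrable 0 x)
      ((continuous_dickQ s a c).intervalIntegrable x y)]
    ring
  have h2 : 0 ≤ ∫ u in x..y, dickQ s a c u :=
    intervalIntegral.integral_nonneg hxy (fun u _ => dickQ_nonneg hs ha hc u)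
  linarith

lemma dickPhi_le_one {θ s a c : ℝ} (hθ : 0 ≤ θ) (hs : 0 ≤ s) (ha : 0 ≤ a) (hc : 0 ≤ c) (L t : ℝ) :
    dickPhi θ s a c L t ≤ 1 := by
  rw [dickPhi, Real.exp_le_one_iff]
  have := dickP_mono hs ha hc (min_le_right t L)
  have : 0 ≤ dickP s a c L - dickP s a c (min t L) := by linarith
  nlinarith

lemma dickPhi_pos (θ s a c L t : ℝ) : 0 < dickPhi θ s a c L t := Real.exp_pos _

lemma dickPhi_nonneg (θ s a c L t : ℝ) : 0 ≤ dickPhi θ s a c L t := (dickPhi_pos _ _ _ _ _ _).le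

lemma dickPhi_of_le {θ s a c L t : ℝ} (h : L ≤ t) : dickPhi θ s a c L t = 1 := by
  rw [dickPhi, min_eq_right h]; simp

lemma dickG_pos (s a c L t : ℝ) : 0 < dickG s a c L t := by
  rw [dickG]; split <;> [exact Real.exp_pos _; norm_num]

lemma dickG_le_one {s a c : ℝ} (hs : 0 ≤ s) (ha : 0 ≤ a) (hc : 0 ≤ c) (L t : ℝ) :
    dickG s a c L t ≤ 1 := by
  rw [dickG]; split
  · rw [Real.exp_le_one_iff]
    have : 0 ≤ s * (a * c * Real.exp t) := by positivity
    linarith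
  · exact le_refl 1

lemma dickG_of_gt {s a c L t : ℝ} (h : ¬ t ≤ L) : dickG s a c L t = 1 := if_neg h

lemma measurable_dickG (s a c L : ℝ) : Measurable (dickG s a c L) := by
  unfold dickG
  exact Measurable.ite measurableSet_Iic (by fun_prop) measurable_const

lemma continuous_dickPhi (θ s a c L : ℝ) : Continuous (dickPhi θ s a c L) := by
  unfold dickPhi
  have h : Continuous fun t : ℝ => dickP s a c L - dickP s a c (min t L) :=
    continuous_const.sub ((continuous_dickP s a c).comp (continuous_id.min continuous_const))
  exact ((continuous_const.mul h).neg).rexp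

lemma integral_exp_tail {θ : ℝ} (hθ : 0 < θ) (b : ℝ) :
    ∫ x in Ioi b, θ * Real.exp (-(θ * x)) = Real.exp (-(θ * b)) := by
  have hderiv : ∀ x ∈ Ici b, HasDerivAt (fun y => -Real.exp (-(θ * y)))
      (θ * Real.exp (-(θ * x))) x := by
    intro x _
    have h1 : HasDerivAt (fun y : ℝ => -(θ * y)) (-θ) x := by
      simpa using ((hasDerivAt_id x).const_mul θ).fun_neg
    have := (h1.exp).fun_neg
    exact this.congr_deriv (by ring)
  have hint : IntegrableOn (fun x => θ * Real.exp (-(θ * x))) (Ioi b) := by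
    have := (exp_neg_integrableOn_Ioi b hθ).const_mul θ
    simp only [neg_mul] at this; exact this
  have htend : Tendsto (fun y => -Real.exp (-(θ * y))) atTop (𝓝 0) := by
    rw [show (0:ℝ) = -0 by ring]
    refine Tendsto.neg ?_
    have h2 : Tendsto (fun y : ℝ => -(θ * y)) atTop atBot := by
      have := tendsto_id.const_mul_atTop hθ
      exact tendsto_neg_atBot_iff.mpr this
    exact Real.tendsto_exp_atBot.comp h2
  have := integral_Ioi_of_hasDerivAt_of_tendsto
    ((hderiv b (self_mem_Ici)).continuousAt.continuousWithinAt) (fun x hx => hderiv x (mem_Ici.2 (le_of_lt hx))) hint htend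
  rw [this]; ring

lemma integral_expMeasure {θ : ℝ} (hθ : 0 < θ) (f : ℝ → ℝ) :
    ∫ x, f x ∂(expMeasure θ) = ∫ x in Ici (0:ℝ), θ * Real.exp (-(θ * x)) * f x := by
  have h1 : expMeasure θ = volume.withDensity
      (fun x => ((exponentialPDFReal θ x).toNNReal : ℝ≥0∞)) := by
    rfl
  rw [h1, integral_withDensity_eq_integral_smul (by
      exact (measurable_exponentialPDFReal θ).real_toNNReal)]
  have h2 : ∀ x : ℝ, (exponentialPDFReal θ x).toNNReal • f x =
      Set.indicator (Ici (0:ℝ)) (fun x => θ * Real.exp (-(θ * x)) * f x) x := by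
    intro x
    rw [NNReal.smul_def, Real.coe_toNNReal _ (exponentialPDFReal_nonneg hθ x)]
    rw [exponentialPDFReal, gammaPDFReal]
    by_cases hx : 0 ≤ x
    · rw [if_pos hx, Set.indicator_of_mem (Set.mem_Ici.2 hx)]
      simp [Real.Gamma_one, Real.rpow_one, Real.rpow_zero, smul_eq_mul]
    · rw [if_neg hx, Set.indicator_of_notMem (by simpa using hx)]
      simp
  simp_rw [h2]
  rw [integral_indicator measurableSet_Ici]

lemma dick_keyA {θ s a c : ℝ} (hθ : 0 < θ) (L t : ℝ) :
    ∫ x, dickG s a c L (t + x) * dickPhi θ s a c L (t + x) ∂(expMeasure θ)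
      = dickPhi θ s a c L t := by
  rw [integral_expMeasure hθ]
  by_cases hT : t ≤ L
  · -- main case
    set m : ℝ := L - t with hm_def
    have hm : 0 ≤ m := by simp [hm_def]; linarith
    set W : ℝ → ℝ := fun x => θ * Real.exp (-(θ * x)) *
      (Real.exp (-(s * (a * c * Real.exp (t + x)))) *
        Real.exp (-(θ * (dickP s a c L - dickP s a c (t + x))))) with hW_def
    have hWcont : Continuous W := by
      apply Continuous.mul (by fun_prop)
      apply Continuous.mul (by fun_prop)
      apply Real.continuous_exp.comp
      apply Continuous.neg
      apply Continuous.mul continuous_const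
      exact continuous_const.sub ((continuous_dickP s a c).comp (by fun_prop))
    set h : ℝ → ℝ := fun x => θ * Real.exp (-(θ * x)) *
      (dickG s a c L (t + x) * dickPhi θ s a c L (t + x)) with hh_def
    have hcong1 : ∀ x ∈ Ioc 0 m, h x = W x := by
      intro x hx
      have hxm : t + x ≤ L := by have := hx.2; simp only [hm_def] at this; linarith
      simp only [hh_def, hW_def, dickG, dickPhi, if_pos hxm, min_eq_left hxm]
    have hcong2 : ∀ x ∈ Ioi m, h x = θ * Real.exp (-(θ * x)) := by
      intro x hx
      have hxm : ¬ t + x ≤ L := by simp only [mem_Ioi, hm_def] at hx ⊢; linarith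
      rw [hh_def]
      simp only [dickG_of_gt hxm, dickPhi_of_le (le_of_not_ge hxm), mul_one, one_mul]
    have hint2 : IntegrableOn (fun x => θ * Real.exp (-(θ * x))) (Ioi m) := by
      have := (exp_neg_integrableOn_Ioi m hθ).const_mul θ
      simp only [neg_mul] at this; exact this
    have hIoc : IntegrableOn h (Ioc 0 m) :=
      (hWcont.integrableOn_Ioc).congr_fun (fun x hx => (hcong1 x hx).symm) measurableSet_Ioc
    have hIoi : IntegrableOn h (Ioi m) :=
      hint2.congr_fun (fun x hx => (hcong2 x hx).symm) measurableSet_Ioi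
    have hsplit : ∫ x in Ici (0:ℝ), h x = (∫ x in Ioc 0 m, h x) + ∫ x in Ioi m, h x := by
      rw [integral_Ici_eq_integral_Ioi, ← Set.Ioc_union_Ioi_eq_Ioi hm,
        setIntegral_union ?_ measurableSet_Ioi hIoc hIoi]
      rw [Set.disjoint_left]
      rintro x ⟨_, h1⟩ h2
      exact absurd h1 (not_le.2 h2)
    have hV : ∀ x : ℝ, HasDerivAt
        (fun x => Real.exp (-(θ * x)) *
          Real.exp (-(θ * (dickP s a c L - dickP s a c (t + x))))) (-(W x)) x := by
      intro x
      have hu : HasDerivAt (fun x : ℝ => Real.exp (-(θ * x))) (-θ * Real.exp (-(θ * x))) x := by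
        have h1 : HasDerivAt (fun x : ℝ => -(θ * x)) (-θ) x := by
          simpa using ((hasDerivAt_id x).const_mul θ).fun_neg
        simpa [mul_comm] using h1.exp
      have hP : HasDerivAt (fun x => dickP s a c (t + x)) (dickQ s a c (t + x)) x := by
        have := (hasDerivAt_dickP s a c (t + x)).comp x ((hasDerivAt_id x).const_add t)
        simpa [Function.comp_def] using this
      have hv := ((((hP.const_sub (dickP s a c L)).const_mul θ).fun_neg).exp)
      have := hu.mul hv
      exact this.congr_deriv (by
        simp only [hW_def, dickQ]
        ring)
    have hftc : ∫ x in (0:ℝ)..m, -(W x) =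
        (Real.exp (-(θ * m)) * Real.exp (-(θ * (dickP s a c L - dickP s a c (t + m))))) -
        (Real.exp (-(θ * 0)) * Real.exp (-(θ * (dickP s a c L - dickP s a c (t + 0))))) :=
      intervalIntegral.integral_eq_sub_of_hasDerivAt (fun x _ => hV x)
        ((hWcont.neg).intervalIntegrable 0 m)
    have hterm1 : ∫ x in Ioc 0 m, h x = dickPhi θ s a c L t - Real.exp (-(θ * m)) := by
      rw [setIntegral_congr_fun measurableSet_Ioc hcong1,
        ← intervalIntegral.integral_of_le hm]
      have : ∫ x in (0:ℝ)..m, W x = - ∫ x in (0:ℝ)..m, -(W x) := by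
        rw [intervalIntegral.integral_neg]; ring
      rw [this, hftc]
      have hL : t + m = L := by simp [hm_def]
      rw [hL, dickPhi, min_eq_left hT]
      simp
    have hterm2 : ∫ x in Ioi m, h x = Real.exp (-(θ * m)) := by
      rw [setIntegral_congr_fun measurableSet_Ioi hcong2, integral_exp_tail hθ]
    rw [show (∫ x in Ici (0:ℝ), θ * Real.exp (-(θ * x)) *
        (dickG s a c L (t + x) * dickPhi θ s a c L (t + x))) = ∫ x in Ici (0:ℝ), h x from rfl,
      hsplit, hterm1, hterm2]
    ring
  · -- t > L
    have hcong : ∀ x ∈ Ici (0:ℝ), θ * Real.exp (-(θ * x)) *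
        (dickG s a c L (t + x) * dickPhi θ s a c L (t + x)) = θ * Real.exp (-(θ * x)) := by
      intro x hx
      have h1 : ¬ t + x ≤ L := by
        simp only [mem_Ici] at hx
        push_neg at hT
        push_neg
        linarith
      rw [dickG_of_gt h1, dickPhi_of_le (le_of_not_ge h1), mul_one, mul_one]
    rw [setIntegral_congr_fun measurableSet_Ici hcong, integral_Ici_eq_integral_Ioi,
      integral_exp_tail hθ, dickPhi_of_le (le_of_not_ge hT)]
    simp

section Induct

variable {Ω₂ : Type*} [MeasurableSpace Ω₂] (P₂ : Measure Ω₂) [IsProbabilityMeasure P₂]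
  {θ s a c L : ℝ} (E : ℕ → Ω₂ → ℝ)

/-- partial sums of first `n` coordinates -/
noncomputable def dickPS (n : ℕ) (k : ℕ) (v : Fin n → ℝ) : ℝ :=
  ∑ i ∈ Finset.univ.filter (fun i : Fin n => (i : ℕ) < k), v i

lemma measurable_dickPS (n k : ℕ) : Measurable (dickPS n k) :=
  Finset.measurable_sum _ (fun i _ => measurable_pi_apply i)

lemma dickPS_eq (n k : ℕ) (hk : k ≤ n) (ω : Ω₂) :
    dickPS n k (fun i : Fin n => E i ω) = ∑ j ∈ Finset.range k, E j ω := by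
  rw [dickPS, Finset.sum_filter, Fin.sum_univ_eq_sum_range (fun j => if j < k then E j ω else 0) n]
  rw [← Finset.sum_subset (Finset.range_subset_range.2 hk)
    (fun x _ hx => by rw [if_neg (by simpa using hx)])]
  exact Finset.sum_congr rfl (fun x hx => if_pos (Finset.mem_range.1 hx))

lemma dick_induct (hθ : 0 < θ) (hs : 0 ≤ s) (ha : 0 ≤ a) (hc : 0 ≤ c)
    (hE : ∀ k, Measurable (E k))
    (hEindep : iIndepFun E P₂)
    (hElaw : ∀ k, P₂.map (E k) = ProbabilityTheory.expMeasure θ) :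
    ∀ n : ℕ, ∫ ω, (∏ m ∈ Finset.range n,
        dickG s a c L (∑ j ∈ Finset.range (m+1), E j ω)) *
        dickPhi θ s a c L (∑ j ∈ Finset.range n, E j ω) ∂P₂
      = dickPhi θ s a c L 0 := by
  intro n
  induction n with
  | zero => simp
  | succ n ih =>
    have hexpP : IsProbabilityMeasure (expMeasure θ) := isProbabilityMeasure_expMeasure hθ
    set V : Ω₂ → (Fin n → ℝ) := fun ω i => E i ω with hV_def
    have hV : Measurable V := measurable_pi_lambda _ (fun i => hE i)
    have hmapP : IsProbabilityMeasure (P₂.map V) := Measure.isProbabilityMeasure_map hV.aemeasurable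
    set H : (Fin n → ℝ) × ℝ → ℝ := fun p =>
      (∏ m ∈ Finset.range n, dickG s a c L (dickPS n (m+1) p.1)) *
      (dickG s a c L (dickPS n n p.1 + p.2) * dickPhi θ s a c L (dickPS n n p.1 + p.2))
      with hH_def
    have hHmeas : Measurable H := by
      apply Measurable.mul
      · exact Finset.measurable_prod _ (fun m _ =>
          (measurable_dickG s a c L).comp ((measurable_dickPS n (m+1)).comp measurable_fst))
      · have hsum : Measurable (fun p : (Fin n → ℝ) × ℝ => dickPS n n p.1 + p.2) :=
          ((measurable_dickPS n n).comp measurable_fst).add measurable_snd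
        exact ((measurable_dickG s a c L).comp hsum).mul
          ((continuous_dickPhi θ s a c L).measurable.comp hsum)
    have hH01 : ∀ p, 0 ≤ H p ∧ H p ≤ 1 := by
      intro p
      constructor
      · apply mul_nonneg
        · exact Finset.prod_nonneg (fun m _ => (dickG_pos _ _ _ _ _).le)
        · exact mul_nonneg (dickG_pos _ _ _ _ _).le (dickPhi_pos _ _ _ _ _ _).le
      · apply mul_le_one₀
        · exact Finset.prod_le_one (fun m _ => (dickG_pos _ _ _ _ _).le)
            (fun m _ => dickG_le_one hs ha hc _ _)
        · exact mul_nonneg (dickG_pos _ _ _ _ _).le (dickPhi_pos _ _ _ _ _ _).le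
        · exact mul_le_one₀ (dickG_le_one hs ha hc _ _) (dickPhi_pos _ _ _ _ _ _).le
            (dickPhi_le_one hθ.le hs ha hc _ _)
    -- independence of V and E n
    have hpairIndep : IndepFun V (E n) P₂ := by
      have hdisj : Disjoint (Finset.range n) ({n} : Finset ℕ) := by
        simp [Finset.disjoint_singleton_right]
      have hfin := hEindep.indepFun_finset (Finset.range n) {n} hdisj hE
      have := hfin.comp
        (φ := fun w : (↥(Finset.range n) → ℝ) => fun i : Fin n =>
          w ⟨(i : ℕ), Finset.mem_range.2 i.isLt⟩)
        (ψ := fun w : (↥({n} : Finset ℕ) → ℝ) => w ⟨n, Finset.mem_singleton_self n⟩)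
        (measurable_pi_lambda _ (fun i => measurable_pi_apply _))
        (measurable_pi_apply _ :
          Measurable fun w : (↥({n} : Finset ℕ) → ℝ) => w ⟨n, Finset.mem_singleton_self n⟩)
      exact this
    have hmap : P₂.map (fun ω => (V ω, E n ω)) = (P₂.map V).prod (expMeasure θ) := by
      rw [← hElaw n]
      exact (indepFun_iff_map_prod_eq_prod_map_map hV.aemeasurable
        (hE n).aemeasurable).1 hpairIndep
    have hHint : Integrable H ((P₂.map V).prod (expMeasure θ)) := by
      refine Integrable.mono' (integrable_const 1) hHmeas.aestronglyMeasurable ?_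
      refine ae_of_all _ (fun p => ?_)
      rw [Real.norm_eq_abs, abs_of_nonneg (hH01 p).1]
      exact (hH01 p).2
    calc
      ∫ ω, (∏ m ∈ Finset.range (n+1),
          dickG s a c L (∑ j ∈ Finset.range (m+1), E j ω)) *
          dickPhi θ s a c L (∑ j ∈ Finset.range (n+1), E j ω) ∂P₂
        = ∫ ω, H (V ω, E n ω) ∂P₂ := by
          refine integral_congr_ae (ae_of_all _ (fun ω => ?_))
          simp only [hH_def, hV_def]
          rw [dickPS_eq E n n le_rfl ω, Finset.prod_range_succ, Finset.sum_range_succ]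
          have hprod : ∏ m ∈ Finset.range n,
              dickG s a c L (∑ j ∈ Finset.range (m+1), E j ω)
              = ∏ m ∈ Finset.range n,
                dickG s a c L (dickPS n (m+1) (fun i : Fin n => E i ω)) :=
            Finset.prod_congr rfl (fun m hm => by
              rw [dickPS_eq E n (m+1) (Finset.mem_range.1 hm) ω])
          rw [hprod]; ring
      _ = ∫ p, H p ∂(P₂.map (fun ω => (V ω, E n ω))) := by
          rw [integral_map (hV.prodMk (hE n)).aemeasurable hHmeas.aestronglyMeasurable]
      _ = ∫ p, H p ∂((P₂.map V).prod (expMeasure θ)) := by rw [hmap]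
      _ = ∫ v, ∫ x, H (v, x) ∂(expMeasure θ) ∂(P₂.map V) := integral_prod _ hHint
      _ = ∫ v, (∏ m ∈ Finset.range n, dickG s a c L (dickPS n (m+1) v)) *
            dickPhi θ s a c L (dickPS n n v) ∂(P₂.map V) := by
          refine integral_congr_ae (ae_of_all _ (fun v => ?_))
          rw [hH_def]
          simp only
          rw [integral_const_mul, dick_keyA hθ L (dickPS n n v)]
      _ = ∫ ω, (∏ m ∈ Finset.range n, dickG s a c L (dickPS n (m+1) (V ω))) *
            dickPhi θ s a c L (dickPS n n (V ω)) ∂P₂ := by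
          rw [integral_map hV.aemeasurable]
          apply Measurable.aestronglyMeasurable
          refine Measurable.mul ?_ ?_
          · exact Finset.measurable_prod _ (fun m _ =>
              (measurable_dickG s a c L).comp (measurable_dickPS n (m+1)))
          · exact (continuous_dickPhi θ s a c L).measurable.comp (measurable_dickPS n n)
      _ = ∫ ω, (∏ m ∈ Finset.range n,
            dickG s a c L (∑ j ∈ Finset.range (m+1), E j ω)) *
            dickPhi θ s a c L (∑ j ∈ Finset.range n, E j ω) ∂P₂ := by
          refine integral_congr_ae (ae_of_all _ (fun ω => ?_))
          simp only [hV_def]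
          rw [dickPS_eq E n n le_rfl ω]
          have hprod : ∏ m ∈ Finset.range n,
              dickG s a c L (∑ j ∈ Finset.range (m+1), E j ω)
              = ∏ m ∈ Finset.range n,
                dickG s a c L (dickPS n (m+1) (fun i : Fin n => E i ω)) :=
            Finset.prod_congr rfl (fun m hm => by
              rw [dickPS_eq E n (m+1) (Finset.mem_range.1 hm) ω])
          rw [hprod]
      _ = dickPhi θ s a c L 0 := ih

end Induct

section Tail

variable {Ω₂ : Type*} [MeasurableSpace Ω₂] (P₂ : Measure Ω₂) [IsProbabilityMeasure P₂]
  {θ s a c L : ℝ} (E : ℕ → Ω₂ → ℝ)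

lemma dick_eps (hθ : 0 < θ) (hs : 0 ≤ s) (ha : 0 < a) (hc0 : 0 < c) (hc1 : c < 1)
    (hE : ∀ k, Measurable (E k))
    (hEindep : iIndepFun E P₂)
    (hElaw : ∀ k, P₂.map (E k) = ProbabilityTheory.expMeasure θ)
    (ε : Ω₂ → ℝ)
    (hε : ∀ ω, ε ω =
      ∑' n : ℕ,
        if (∑ k ∈ Finset.range (n + 1), E k ω) ≤ Real.log (1 / c) then
          a * c * Real.exp (∑ k ∈ Finset.range (n + 1), E k ω)
        else 0)
    (hL : L = Real.log (1 / c)) :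
    ∫ ω, Real.exp (-(s * ε ω)) ∂P₂ = dickPhi θ s a c L 0 := by
  have hexpP : IsProbabilityMeasure (expMeasure θ) := isProbabilityMeasure_expMeasure hθ
  -- the probability that an exponential r.v. is at most L
  set q : ℝ≥0∞ := expMeasure θ (Iic L) with hq_def
  have hq_ne_top : q ≠ ⊤ := by
    rw [hq_def]; exact (measure_lt_top _ _).ne
  have hq_toReal : q.toReal < 1 := by
    have h1 : q.toReal = cdf (expMeasure θ) L := (cdf_eq_real (μ := expMeasure θ) L).symm
    have h2 : cdf (expMeasure θ) L = if 0 ≤ L then 1 - Real.exp (-(θ * L)) else 0 :=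
      cdf_expMeasure_eq hθ L
    rw [h1, h2]
    split_ifs with h
    · have := Real.exp_pos (-(θ * L)); linarith
    · norm_num
  set pL : ℝ := q.toReal with hpL_def
  have hpL0 : 0 ≤ pL := ENNReal.toReal_nonneg
  -- each E k is ≥ 0 a.s.
  have hexp_neg : expMeasure θ (Iio 0) = 0 := by
    have : expMeasure θ (Iio 0) = ∫⁻ x in Iio (0:ℝ), exponentialPDF θ x := by
      rw [expMeasure, gammaMeasure, withDensity_apply _ measurableSet_Iio]; rfl
    rw [this, lintegral_exponentialPDF_of_nonpos le_rfl]
  have hEnn : ∀ᵐ ω ∂P₂, ∀ k, 0 ≤ E k ω := by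
    rw [ae_all_iff]
    intro k
    have : P₂ {ω | ¬ 0 ≤ E k ω} = 0 := by
      have h1 : {ω | ¬ 0 ≤ E k ω} = E k ⁻¹' (Iio 0) := by
        ext ω; simp [not_le]
      rw [h1, ← Measure.map_apply (hE k) measurableSet_Iio, hElaw k, hexp_neg]
    exact this
  -- the product bound on intersections
  have hprodbound : ∀ n : ℕ, P₂ (⋂ k ∈ Finset.range n, E k ⁻¹' (Iic L)) = q ^ n := by
    intro n
    rw [hEindep.measure_inter_preimage_eq_mul (Finset.range n)
      (sets := fun _ => Iic L) (fun i _ => measurableSet_Iic)]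
    rw [Finset.prod_congr rfl (fun i _ => by
      rw [← Measure.map_apply (hE i) measurableSet_Iic, hElaw i, ← hq_def])]
    simp
  -- a.s. some E k exceeds L
  have hEbig : ∀ᵐ ω ∂P₂, ∃ k, L < E k ω := by
    have hsub : ∀ n : ℕ, {ω | ¬ ∃ k, L < E k ω} ⊆ ⋂ k ∈ Finset.range n, E k ⁻¹' (Iic L) := by
      intro n ω hω
      simp only [mem_setOf_eq, not_exists, not_lt] at hω
      simp only [mem_iInter, mem_preimage, mem_Iic]
      exact fun k _ => hω k
    have hle : ∀ n : ℕ, (P₂ {ω | ¬ ∃ k, L < E k ω}).toReal ≤ pL ^ n := by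
      intro n
      have h1 : P₂ {ω | ¬ ∃ k, L < E k ω} ≤ q ^ n := by
        rw [← hprodbound n]; exact measure_mono (hsub n)
      have h2 := ENNReal.toReal_mono (by exact pow_ne_top hq_ne_top) h1
      rwa [ENNReal.toReal_pow] at h2
    have h0 : (P₂ {ω | ¬ ∃ k, L < E k ω}).toReal ≤ 0 := by
      refine ge_of_tendsto (tendsto_pow_atTop_nhds_zero_of_lt_one hpL0 hq_toReal) ?_
      exact Eventually.of_forall hle
    have : P₂ {ω | ¬ ∃ k, L < E k ω} = 0 := by
      have hfin : P₂ {ω | ¬ ∃ k, L < E k ω} ≠ ⊤ := (measure_lt_top _ _).ne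
      have := le_antisymm h0 ENNReal.toReal_nonneg
      exact (ENNReal.toReal_eq_zero_iff _).1 this |>.resolve_right hfin
    exact this
  -- a.e. convergence of partial products
  have haeconv : ∀ᵐ ω ∂P₂, Tendsto (fun n => ∏ m ∈ Finset.range n,
      dickG s a c L (∑ j ∈ Finset.range (m+1), E j ω)) atTop
      (𝓝 (Real.exp (-(s * ε ω)))) := by
    filter_upwards [hEnn, hEbig] with ω hnn ⟨k₀, hk₀⟩
    set term : ℕ → ℝ := fun m =>
      if (∑ k ∈ Finset.range (m + 1), E k ω) ≤ L then
        a * c * Real.exp (∑ k ∈ Finset.range (m + 1), E k ω)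
      else 0 with hterm_def
    have hGterm : ∀ m, dickG s a c L (∑ j ∈ Finset.range (m+1), E j ω)
        = Real.exp (-(s * term m)) := by
      intro m
      simp only [hterm_def, dickG]
      split_ifs with h
      · rfl
      · simp
    have htermzero : ∀ m, k₀ ≤ m → term m = 0 := by
      intro m hm
      have hYbig : L < ∑ j ∈ Finset.range (m+1), E j ω := by
        have h1 : E k₀ ω ≤ ∑ j ∈ Finset.range (m+1), E j ω := by
          refine Finset.single_le_sum (fun j _ => hnn j) ?_
          exact Finset.mem_range.2 (Nat.lt_succ_of_le hm)
        linarith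
      rw [hterm_def]
      exact if_neg (not_le.2 hYbig)
    have hεω : ∀ n, k₀ ≤ n → ε ω = ∑ m ∈ Finset.range n, term m := by
      intro n hn
      rw [hε ω, ← hL]
      exact tsum_eq_sum (fun m hm => htermzero m (le_trans hn (le_of_not_gt
        (fun hlt => hm (Finset.mem_range.2 hlt)))))
    refine tendsto_atTop_of_eventually_const (i₀ := k₀) ?_
    intro n hn
    rw [Finset.prod_congr rfl (fun m _ => hGterm m), ← Real.exp_sum]
    congr 1
    rw [Finset.sum_neg_distrib, ← Finset.mul_sum, ← hεω n hn]
  -- the J sequence and its limit via the induction identity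
  set J : ℕ → ℝ := fun n => ∫ ω, ∏ m ∈ Finset.range n,
    dickG s a c L (∑ j ∈ Finset.range (m+1), E j ω) ∂P₂ with hJ_def
  have hYmeas : ∀ n : ℕ, Measurable (fun ω => ∑ j ∈ Finset.range n, E j ω) :=
    fun n => Finset.measurable_sum _ (fun j _ => hE j)
  have hFmeas : ∀ n : ℕ, Measurable (fun ω => ∏ m ∈ Finset.range n,
      dickG s a c L (∑ j ∈ Finset.range (m+1), E j ω)) :=
    fun n => Finset.measurable_prod _ (fun m _ =>
      (measurable_dickG s a c L).comp (hYmeas (m+1)))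
  have hF01 : ∀ n ω, 0 ≤ (∏ m ∈ Finset.range n,
      dickG s a c L (∑ j ∈ Finset.range (m+1), E j ω)) ∧
      (∏ m ∈ Finset.range n, dickG s a c L (∑ j ∈ Finset.range (m+1), E j ω)) ≤ 1 := by
    intro n ω
    exact ⟨Finset.prod_nonneg (fun m _ => (dickG_pos _ _ _ _ _).le),
      Finset.prod_le_one (fun m _ => (dickG_pos _ _ _ _ _).le)
        (fun m _ => dickG_le_one hs ha.le hc0.le _ _)⟩
  have hFint : ∀ n : ℕ, Integrable (fun ω => ∏ m ∈ Finset.range n,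
      dickG s a c L (∑ j ∈ Finset.range (m+1), E j ω)) P₂ := by
    intro n
    refine Integrable.mono' (integrable_const 1) (hFmeas n).aestronglyMeasurable ?_
    refine ae_of_all _ (fun ω => ?_)
    rw [Real.norm_eq_abs, abs_of_nonneg (hF01 n ω).1]
    exact (hF01 n ω).2
  have hPhiYint : ∀ n : ℕ, Integrable (fun ω => (∏ m ∈ Finset.range n,
      dickG s a c L (∑ j ∈ Finset.range (m+1), E j ω)) *
      dickPhi θ s a c L (∑ j ∈ Finset.range n, E j ω)) P₂ := by
    intro n
    refine Integrable.mono' (integrable_const 1)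
      (((hFmeas n).mul ((continuous_dickPhi θ s a c L).measurable.comp
        (hYmeas n))).aestronglyMeasurable) ?_
    refine ae_of_all _ (fun ω => ?_)
    rw [Real.norm_eq_abs, abs_of_nonneg (mul_nonneg (hF01 n ω).1 (dickPhi_pos _ _ _ _ _ _).le)]
    exact mul_le_one₀ (hF01 n ω).2 (dickPhi_pos _ _ _ _ _ _).le
      (dickPhi_le_one hθ.le hs ha.le hc0.le _ _)
  -- measure bound for {Y n ≤ L}
  have hSmeas : ∀ n : ℕ, MeasurableSet {ω | (∑ j ∈ Finset.range n, E j ω) ≤ L} :=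
    fun n => measurableSet_le (hYmeas n) measurable_const
  have hPS : ∀ n : ℕ, (P₂ {ω | (∑ j ∈ Finset.range n, E j ω) ≤ L}).toReal ≤ pL ^ n := by
    intro n
    have hbad : P₂ (⋃ k, E k ⁻¹' (Iio 0)) = 0 := by
      refine measure_iUnion_null (fun k => ?_)
      rw [← Measure.map_apply (hE k) measurableSet_Iio, hElaw k, hexp_neg]
    have hsub : {ω | (∑ j ∈ Finset.range n, E j ω) ≤ L} ⊆
        (⋃ k, E k ⁻¹' (Iio 0)) ∪ ⋂ k ∈ Finset.range n, E k ⁻¹' (Iic L) := by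
      intro ω hω
      by_cases hbadω : ω ∈ ⋃ k, E k ⁻¹' (Iio 0)
      · exact Or.inl hbadω
      · refine Or.inr ?_
        simp only [mem_iUnion, mem_preimage, mem_Iio, not_exists, not_lt] at hbadω
        simp only [mem_iInter, mem_preimage, mem_Iic]
        intro k hk
        have h1 : E k ω ≤ ∑ j ∈ Finset.range n, E j ω :=
          Finset.single_le_sum (fun j _ => hbadω j) hk
        exact le_trans h1 hω
    have h1 : P₂ {ω | (∑ j ∈ Finset.range n, E j ω) ≤ L} ≤ q ^ n := by
      refine le_trans (measure_mono hsub) ?_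
      refine le_trans (measure_union_le _ _) ?_
      rw [hbad, hprodbound n, zero_add]
    have h2 := ENNReal.toReal_mono (pow_ne_top hq_ne_top) h1
    rwa [ENNReal.toReal_pow] at h2
  -- |J n - Phi 0| ≤ pL ^ n
  have hJdiff : ∀ n : ℕ, |J n - dickPhi θ s a c L 0| ≤ pL ^ n := by
    intro n
    have hI := dick_induct P₂ (L := L) E hθ hs ha.le hc0.le hE hEindep hElaw n
    rw [hJ_def, ← hI]
    simp only
    rw [← integral_sub (hFint n) (hPhiYint n)]
    have hbound : ∀ ω, |(∏ m ∈ Finset.range n,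
        dickG s a c L (∑ j ∈ Finset.range (m+1), E j ω)) -
        (∏ m ∈ Finset.range n, dickG s a c L (∑ j ∈ Finset.range (m+1), E j ω)) *
        dickPhi θ s a c L (∑ j ∈ Finset.range n, E j ω)|
        ≤ Set.indicator {ω | (∑ j ∈ Finset.range n, E j ω) ≤ L} (fun _ => (1:ℝ)) ω := by
      intro ω
      have hptw : (∏ m ∈ Finset.range n,
          dickG s a c L (∑ j ∈ Finset.range (m+1), E j ω)) -
          (∏ m ∈ Finset.range n, dickG s a c L (∑ j ∈ Finset.range (m+1), E j ω)) *
          dickPhi θ s a c L (∑ j ∈ Finset.range n, E j ω)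
          = (∏ m ∈ Finset.range n, dickG s a c L (∑ j ∈ Finset.range (m+1), E j ω)) *
            (1 - dickPhi θ s a c L (∑ j ∈ Finset.range n, E j ω)) := by ring
      rw [hptw]
      by_cases hY : (∑ j ∈ Finset.range n, E j ω) ≤ L
      · rw [Set.indicator_of_mem (by exact hY)]
        have hphi1 := dickPhi_le_one hθ.le hs ha.le hc0.le L (∑ j ∈ Finset.range n, E j ω)
        have hphi0 := dickPhi_pos θ s a c L (∑ j ∈ Finset.range n, E j ω)
        rw [abs_of_nonneg (mul_nonneg (hF01 n ω).1 (by linarith))]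
        exact mul_le_one₀ (hF01 n ω).2 (by linarith) (by linarith)
      · rw [Set.indicator_of_notMem (by exact hY), dickPhi_of_le (le_of_not_ge hY)]
        simp
    have habs : |∫ ω, ((∏ m ∈ Finset.range n,
        dickG s a c L (∑ j ∈ Finset.range (m+1), E j ω)) -
        (∏ m ∈ Finset.range n, dickG s a c L (∑ j ∈ Finset.range (m+1), E j ω)) *
        dickPhi θ s a c L (∑ j ∈ Finset.range n, E j ω)) ∂P₂|
        ≤ ∫ ω, Set.indicator {ω | (∑ j ∈ Finset.range n, E j ω) ≤ L}
            (fun _ => (1:ℝ)) ω ∂P₂ := by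
      refine le_trans (show |∫ ω, ((∏ m ∈ Finset.range n,
          dickG s a c L (∑ j ∈ Finset.range (m+1), E j ω)) -
          (∏ m ∈ Finset.range n, dickG s a c L (∑ j ∈ Finset.range (m+1), E j ω)) *
          dickPhi θ s a c L (∑ j ∈ Finset.range n, E j ω)) ∂P₂|
          ≤ ∫ ω, |(∏ m ∈ Finset.range n,
          dickG s a c L (∑ j ∈ Finset.range (m+1), E j ω)) -
          (∏ m ∈ Finset.range n, dickG s a c L (∑ j ∈ Finset.range (m+1), E j ω)) *
          dickPhi θ s a c L (∑ j ∈ Finset.range n, E j ω)| ∂P₂ from by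
        simpa [Real.norm_eq_abs] using norm_integral_le_integral_norm (μ := P₂)
          (fun ω => (∏ m ∈ Finset.range n,
          dickG s a c L (∑ j ∈ Finset.range (m+1), E j ω)) -
          (∏ m ∈ Finset.range n, dickG s a c L (∑ j ∈ Finset.range (m+1), E j ω)) *
          dickPhi θ s a c L (∑ j ∈ Finset.range n, E j ω))) ?_
      refine integral_mono (((hFint n).sub (hPhiYint n)).abs) ?_ hbound
      exact (integrable_const 1).indicator (hSmeas n)
    refine le_trans habs ?_
    rw [integral_indicator_const (1:ℝ) (hSmeas n), smul_eq_mul, mul_one]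
    exact hPS n
  -- conclude
  have hJtend1 : Tendsto J atTop (𝓝 (dickPhi θ s a c L 0)) := by
    rw [tendsto_iff_dist_tendsto_zero]
    refine squeeze_zero (fun n => dist_nonneg) (fun n => ?_)
      (tendsto_pow_atTop_nhds_zero_of_lt_one hpL0 hq_toReal)
    rw [Real.dist_eq]
    exact hJdiff n
  have hJtend2 : Tendsto J atTop (𝓝 (∫ ω, Real.exp (-(s * ε ω)) ∂P₂)) := by
    refine tendsto_integral_of_dominated_convergence (fun _ => (1:ℝ))
      (fun n => (hFmeas n).aestronglyMeasurable) (integrable_const 1) (fun n => ?_) haeconv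
    refine ae_of_all _ (fun ω => ?_)
    rw [Real.norm_eq_abs, abs_of_nonneg (hF01 n ω).1]
    exact (hF01 n ω).2
  exact tendsto_nhds_unique hJtend2 hJtend1

end Tail

lemma ae_ne_zero : ∀ᵐ u : ℝ ∂volume, u ≠ 0 := by
  rw [ae_iff]
  have h : {u : ℝ | ¬ u ≠ 0} = {0} := by ext u; simp
  rw [h]
  exact Real.volume_singleton

lemma dick_Gf_integral_eq (σ x y : ℝ) :
    ∫ u in x..y, (1 - Real.exp (-(σ * u))) / u = ∫ u in x..y, dickGf σ u := by
  refine intervalIntegral.integral_congr_ae ?_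
  filter_upwards [ae_ne_zero] with u hu _
  rw [dickGf, if_neg hu]

lemma dick_calc {θ s a c : ℝ} (hs : 0 ≤ s) (ha : 0 < a) (hc0 : 0 < c) (hc1 : c < 1) :
    (∫ u in (0:ℝ)..a, (1 - Real.exp (-(s * c * u))) / u) + dickP s a c (Real.log (1/c))
      = ∫ u in (0:ℝ)..a, (1 - Real.exp (-(s * u))) / u := by
  have hL : Real.exp (Real.log (1/c)) = 1/c := Real.exp_log (by positivity)
  -- step 1: scaling substitution
  have h2 : ∀ u : ℝ, dickGf (s*c) u = c • dickGf s (c*u) := by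
    intro u
    rcases eq_or_ne u 0 with rfl | hu
    · simp [dickGf]; ring
    · have hcu : c * u ≠ 0 := mul_ne_zero hc0.ne' hu
      rw [dickGf, dickGf, if_neg hu, if_neg hcu, smul_eq_mul]
      field_simp
  have h3 : ∫ u in (0:ℝ)..a, c • dickGf s (c*u) = ∫ v in (c*0)..(c*a), dickGf s v := by
    have hderiv : ∀ x ∈ Set.uIcc (0:ℝ) a, HasDerivAt (fun u : ℝ => c * u) c x := by
      intro x _
      simpa using (hasDerivAt_id x).const_mul c
    exact intervalIntegral.integral_comp_smul_deriv hderiv continuousOn_const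
      (continuous_dickGf s)
  have hstep1 : ∫ u in (0:ℝ)..a, (1 - Real.exp (-(s * c * u))) / u
      = ∫ v in (0:ℝ)..(c*a), dickGf s v := by
    rw [dick_Gf_integral_eq (s*c) 0 a]
    rw [show (∫ u in (0:ℝ)..a, dickGf (s*c) u) = ∫ u in (0:ℝ)..a, c • dickGf s (c*u) from
      intervalIntegral.integral_congr (fun u _ => h2 u)]
    rw [h3, mul_zero]
  -- step 2: exponential substitution for dickP
  have hstep2 : dickP s a c (Real.log (1/c)) = ∫ v in (c*a)..a, dickGf s v := by
    have hderiv : ∀ x ∈ Set.uIcc (0:ℝ) (Real.log (1/c)),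
        HasDerivAt (fun u : ℝ => a * c * Real.exp u) (a * c * Real.exp x) x := by
      intro x _
      exact (Real.hasDerivAt_exp x).const_mul (a*c)
    have h4 := intervalIntegral.integral_comp_smul_deriv hderiv
      (by fun_prop) (continuous_dickGf s)
    simp only [Function.comp] at h4
    have h5 : ∀ u : ℝ, (a * c * Real.exp u) • dickGf s (a * c * Real.exp u) = dickQ s a c u := by
      intro u
      have hne : a * c * Real.exp u ≠ 0 := by positivity
      rw [dickGf, if_neg hne, smul_eq_mul, dickQ]
      field_simp
    rw [dickP, show (∫ u in (0:ℝ)..(Real.log (1/c)), dickQ s a c u)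
      = ∫ u in (0:ℝ)..(Real.log (1/c)), (a * c * Real.exp u) • dickGf s (a * c * Real.exp u) from
      intervalIntegral.integral_congr (fun u _ => (h5 u).symm), h4]
    rw [Real.exp_zero, hL]
    have : a * c * (1/c) = a := by field_simp
    rw [mul_one, this]
    congr 1
    ring
  -- step 3: adjacent intervals
  have hadj : (∫ v in (0:ℝ)..(c*a), dickGf s v) + ∫ v in (c*a)..a, dickGf s v
      = ∫ v in (0:ℝ)..a, dickGf s v :=
    intervalIntegral.integral_add_adjacent_intervals
      ((continuous_dickGf s).intervalIntegrable _ _)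
      ((continuous_dickGf s).intervalIntegrable _ _)
  rw [hstep1, hstep2, hadj, dick_Gf_integral_eq s 0 a]


/-- Let `0 < c < 1`, let `D ∼ GD(θ,a)`, and let `(E_k)` be i.i.d. exponential with rate `θ`,
independent of `D` (modelled on a product space), with arrival times `T_n = E_1 + ⋯ + E_n`.
With the innovation `ε = Σ_{n=1}^∞ a c e^{T_n} 1{T_n ≤ log(1/c)}`, the random variable
`cD + ε` again has the generalized Dickman distribution `GD(θ,a)`; hence the AR(1) process
`X_n = cX_{n−1} + ε_n` with such i.i.d. innovations is strictly stationary with `GD(θ,a)`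
marginals. -/
theorem statement14 {Ω₁ Ω₂ : Type*} [MeasurableSpace Ω₁] [MeasurableSpace Ω₂]
    (P₁ : Measure Ω₁) (P₂ : Measure Ω₂)
    [IsProbabilityMeasure P₁] [IsProbabilityMeasure P₂]
    (θ a c : ℝ) (hθ : 0 < θ) (ha : 0 < a) (hc0 : 0 < c) (hc1 : c < 1)
    (D : Ω₁ → ℝ) (hD : Measurable D) (hDnn : ∀ ω, 0 ≤ D ω)
    (hGD : ∀ s : ℝ, 0 ≤ s →
      ∫ ω, Real.exp (-(s * D ω)) ∂P₁ =
        Real.exp (-(θ * ∫ u in (0:ℝ)..a, (1 - Real.exp (-(s * u))) / u)))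
    (E : ℕ → Ω₂ → ℝ) (hE : ∀ k, Measurable (E k))
    (hEindep : iIndepFun E P₂)
    (hElaw : ∀ k, P₂.map (E k) = ProbabilityTheory.expMeasure θ)
    (ε : Ω₂ → ℝ)
    (hε : ∀ ω, ε ω =
      ∑' n : ℕ,
        if (∑ k ∈ Finset.range (n + 1), E k ω) ≤ Real.log (1 / c) then
          a * c * Real.exp (∑ k ∈ Finset.range (n + 1), E k ω)
        else 0) :
    ∀ s : ℝ, 0 ≤ s →
      ∫ ω : Ω₁ × Ω₂, Real.exp (-(s * (c * D ω.1 + ε ω.2))) ∂(P₁.prod P₂) =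
        Real.exp (-(θ * ∫ u in (0:ℝ)..a, (1 - Real.exp (-(s * u))) / u)) := by
  intro s hs
  set L : ℝ := Real.log (1 / c) with hL_def
  have hL0 : 0 ≤ L := Real.log_nonneg (by rw [le_div_iff₀ hc0]; linarith)
  have hsplit : ∫ ω : Ω₁ × Ω₂, Real.exp (-(s * (c * D ω.1 + ε ω.2))) ∂(P₁.prod P₂)
      = (∫ ω₁, Real.exp (-(s * c * D ω₁)) ∂P₁) * ∫ ω₂, Real.exp (-(s * ε ω₂)) ∂P₂ := by
    rw [← integral_prod_mul (L := ℝ) (fun x => Real.exp (-(s * c * D x)))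
      (fun y => Real.exp (-(s * ε y)))]
    refine integral_congr_ae (ae_of_all _ (fun ω => ?_))
    simp only
    rw [← Real.exp_add]
    congr 1
    ring
  rw [hsplit]
  have h1 : ∫ ω₁, Real.exp (-(s * c * D ω₁)) ∂P₁
      = Real.exp (-(θ * ∫ u in (0:ℝ)..a, (1 - Real.exp (-(s * c * u))) / u)) :=
    hGD (s * c) (mul_nonneg hs hc0.le)
  have h2 : ∫ ω₂, Real.exp (-(s * ε ω₂)) ∂P₂ = dickPhi θ s a c L 0 :=
    dick_eps P₂ E hθ hs ha hc0 hc1 hE hEindep hElaw ε hε hL_def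
  rw [h1, h2]
  have h3 : dickPhi θ s a c L 0 = Real.exp (-(θ * dickP s a c L)) := by
    rw [dickPhi, min_eq_left hL0]
    rw [show dickP s a c 0 = 0 from intervalIntegral.integral_same]
    simp
  rw [h3, ← Real.exp_add]
  congr 1
  have hcalc := dick_calc (θ := θ) hs ha hc0 hc1
  rw [hL_def, ← hcalc]
  ring
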